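/- arXiv:2501.11903 — 7 statements merged into one kernel-verified Lean document; each statement's English description precedes it below -/
import Mathlib

section
/- Let $n, m$ be positive integers, $J, R, Q \in \mathbb{R}^{n \times n}$ with $J^\top = -J$ and $Q$ symmetric positive definite, $F, P \in \mathbb{R}^{n \times m}$, and $D \in \mathbb{R}^{m \times m}$. If the matrix $K_s = \begin{pmatrix} 2R & -(F-P) & -(F+P) \\ -(F-P)^\top & I_m & -D^\top \\ -(F+P)^\top & -D & I_m \end{pmatrix}$ is positive definite, then with $A = (J-R)Q$, $B = F-P$, $C = (F+P)^\top Q$, the matrix $X = Q$ is a positive definite solution of the strict bounded-real LMI, i.e., $\begin{pmatrix} A^\top X + XA & XB & C^\top \\ B^\top X & -I_m & D^\top \\ C & D & -I_m \end{pmatrix} \prec 0$. -/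
open Matrix

/-- 3x3 block matrix with block sizes n, m, m. -/
def blk3 (n m : ℕ) (M11 : Matrix (Fin n) (Fin n) ℝ) (M12 M13 : Matrix (Fin n) (Fin m) ℝ)
    (M21 M31 : Matrix (Fin m) (Fin n) ℝ) (M22 M23 M32 M33 : Matrix (Fin m) (Fin m) ℝ) :
    Matrix (Fin n ⊕ (Fin m ⊕ Fin m)) (Fin n ⊕ (Fin m ⊕ Fin m)) ℝ :=
  Matrix.fromBlocks M11 (Matrix.fromCols M12 M13) (Matrix.fromRows M21 M31)
    (Matrix.fromBlocks M22 M23 M32 M33)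

/-- The scattering pH matrix K_s. -/
def Ksmat (n m : ℕ) (R : Matrix (Fin n) (Fin n) ℝ) (F P : Matrix (Fin n) (Fin m) ℝ)
    (D : Matrix (Fin m) (Fin m) ℝ) :
    Matrix (Fin n ⊕ (Fin m ⊕ Fin m)) (Fin n ⊕ (Fin m ⊕ Fin m)) ℝ :=
  blk3 n m ((2 : ℝ) • R) (-(F - P)) (-(F + P)) (-(F - P)ᵀ) (-(F + P)ᵀ) 1 (-Dᵀ) (-D) 1

/-- The bounded-real LMI matrix. -/
def BRmat (n m : ℕ) (A : Matrix (Fin n) (Fin n) ℝ) (B : Matrix (Fin n) (Fin m) ℝ)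
    (C : Matrix (Fin m) (Fin n) ℝ) (D : Matrix (Fin m) (Fin m) ℝ)
    (X : Matrix (Fin n) (Fin n) ℝ) :
    Matrix (Fin n ⊕ (Fin m ⊕ Fin m)) (Fin n ⊕ (Fin m ⊕ Fin m)) ℝ :=
  blk3 n m (Aᵀ * X + X * A) (X * B) Cᵀ (Bᵀ * X) C (-1) Dᵀ D (-1)

/-- Positive definiteness is preserved under congruence with an invertible matrix. -/
lemma posDef_conj_of_isUnit {k : Type*} [Fintype k] [DecidableEq k]
    {M T : Matrix k k ℝ} (hM : M.PosDef) (hT : IsUnit T) : (Tᴴ * M * T).PosDef := by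
  rw [posDef_iff_dotProduct_mulVec]
  constructor
  · exact isHermitian_conjTranspose_mul_mul T hM.1
  · intro x hx
    have hTx : T *ᵥ x ≠ 0 := fun h =>
      hx (mulVec_injective_iff_isUnit.2 hT (h.trans (mulVec_zero T).symm))
    simpa only [star_mulVec, dotProduct_mulVec, vecMul_vecMul] using (posDef_iff_dotProduct_mulVec.1 hM).2 hTx

theorem stmt0 (n m : ℕ) (hn : 0 < n) (hm : 0 < m)
    (J R Q : Matrix (Fin n) (Fin n) ℝ) (F P : Matrix (Fin n) (Fin m) ℝ)
    (D : Matrix (Fin m) (Fin m) ℝ)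
    (hJ : Jᵀ = -J) (hQ : Q.PosDef)
    (hK : (Ksmat n m R F P D).PosDef) :
    (-(BRmat n m ((J - R) * Q) (F - P) ((F + P)ᵀ * Q) D Q)).PosDef := by
  have hQs : Qᵀ = Q := hQ.1
  -- R is symmetric, from the Hermitian-ness of Ks
  have hR : Rᵀ = R := by
    ext i j
    have h2 := congrFun (congrFun hK.1 (Sum.inl i)) (Sum.inl j)
    simp [Ksmat, blk3, Matrix.fromBlocks, conjTranspose_apply, transpose_apply] at h2
    simpa [transpose_apply] using h2
  set T : Matrix (Fin n ⊕ (Fin m ⊕ Fin m)) (Fin n ⊕ (Fin m ⊕ Fin m)) ℝ :=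
    fromBlocks Q 0 0 1 with hT
  have hTu : IsUnit T := by
    rw [hT, isUnit_fromBlocks_zero₂₁]
    exact ⟨hQ.isUnit, isUnit_one⟩
  have hTconj : Tᴴ = T := by
    rw [hT, fromBlocks_conjTranspose]
    simp [conjTranspose_eq_transpose_of_trivial, hQs]
  have key : -(BRmat n m ((J - R) * Q) (F - P) ((F + P)ᵀ * Q) D Q) =
      Tᴴ * Ksmat n m R F P D * T := by
    rw [hTconj, hT]
    unfold Ksmat BRmat blk3
    rw [fromBlocks_multiply, fromBlocks_multiply]
    simp only [Matrix.mul_zero, Matrix.zero_mul, Matrix.mul_one, Matrix.one_mul, add_zero,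
      zero_add, mul_fromCols, fromRows_mul, fromCols_neg, fromRows_neg, Matrix.mul_neg,
      Matrix.neg_mul, fromBlocks_neg, transpose_mul, transpose_sub, transpose_transpose, hJ, hR,
      hQs]
    congr 1
    simp only [Matrix.mul_smul, Matrix.smul_mul, two_smul, Matrix.mul_assoc, Matrix.sub_mul,
      Matrix.mul_sub, Matrix.neg_mul, Matrix.mul_neg, neg_sub, neg_neg]
    abel_nf
    rw [Matrix.smul_mul, Matrix.mul_smul]
    simp only [neg_neg]
  rw [key]
  exact posDef_conj_of_isUnit hK hTu
end

section
/- Let $A \in \mathbb{R}^{n \times n}$, $B \in \mathbb{R}^{n \times m}$, $C \in \mathbb{R}^{m \times n}$, $D \in \mathbb{R}^{m \times m}$, and suppose $X \in \mathbb{R}^{n \times n}$ is symmetric positive definite and satisfies $\begin{pmatrix} A^\top X + XA & XB & C^\top \\ B^\top X & -I_m & D^\top \\ C & D & -I_m \end{pmatrix} \preceq 0$. Define $J = \tfrac{1}{2}(AX^{-1} - (AX^{-1})^\top)$, $R = -\tfrac{1}{2}(AX^{-1} + (AX^{-1})^\top)$, $Q = X$, $F = \tfrac{1}{2}(B + X^{-1}C^\top)$,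 $P = \tfrac{1}{2}(-B + X^{-1}C^\top)$. Then $J^\top = -J$, $Q \succ 0$, $(J-R)Q = A$, $F - P = B$, $(F+P)^\top Q = C$, and $K_s = \begin{pmatrix} 2R & -(F-P) & -(F+P) \\ -(F-P)^\top & I_m & -D^\top \\ -(F+P)^\top & -D & I_m \end{pmatrix} \succeq 0$. -/
open Matrix

theorem stmt1 (n m : ℕ)
    (A : Matrix (Fin n) (Fin n) ℝ) (B : Matrix (Fin n) (Fin m) ℝ)
    (C : Matrix (Fin m) (Fin n) ℝ) (D : Matrix (Fin m) (Fin m) ℝ)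
    (X : Matrix (Fin n) (Fin n) ℝ) (hX : X.PosDef)
    (hLMI : (-(BRmat n m A B C D X)).PosSemidef) :
    let J := ((1 : ℝ) / 2) • (A * X⁻¹ - (A * X⁻¹)ᵀ)
    let R := -(((1 : ℝ) / 2) • (A * X⁻¹ + (A * X⁻¹)ᵀ))
    let Q := X
    let F := ((1 : ℝ) / 2) • (B + X⁻¹ * Cᵀ)
    let P := ((1 : ℝ) / 2) • (-B + X⁻¹ * Cᵀ)
    Jᵀ = -J ∧ Q.PosDef ∧ (J - R) * Q = A ∧ F - P = B ∧ (F + P)ᵀ * Q = C ∧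
      (Ksmat n m R F P D).PosSemidef := by
  intro J R Q F P
  have hXs : Xᵀ = X := hX.isHermitian.eq
  have hu : IsUnit X.det := isUnit_iff_ne_zero.mpr hX.det_pos.ne'
  have hXi : X * X⁻¹ = 1 := mul_nonsing_inv X hu
  have hiX : X⁻¹ * X = 1 := nonsing_inv_mul X hu
  have hXit : (X⁻¹)ᵀ = X⁻¹ := by rw [transpose_nonsing_inv, hXs]
  have hFP : F + P = X⁻¹ * Cᵀ := by
    simp only [F, P, ← smul_add]
    rw [show B + X⁻¹ * Cᵀ + (-B + X⁻¹ * Cᵀ) = (2:ℝ) • (X⁻¹ * Cᵀ) by module, smul_smul]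
    norm_num
  have hFmP : F - P = B := by
    simp only [F, P, ← smul_sub]
    rw [show B + X⁻¹ * Cᵀ - (-B + X⁻¹ * Cᵀ) = (2:ℝ) • B by module, smul_smul]
    norm_num
  have h2R : (2:ℝ) • R = -(A * X⁻¹ + X⁻¹ * Aᵀ) := by
    have : (A * X⁻¹)ᵀ = X⁻¹ * Aᵀ := by rw [transpose_mul, hXit]
    simp only [R, this, smul_neg, smul_smul]
    norm_num
  refine ⟨?_, hX, ?_, hFmP, ?_, ?_⟩
  · simp only [J, transpose_smul, transpose_sub, transpose_transpose, ← smul_neg]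
    congr 1; abel
  · have : J - R = A * X⁻¹ := by
      simp only [J, R, sub_neg_eq_add, ← smul_add]
      rw [show A * X⁻¹ - (A * X⁻¹)ᵀ + (A * X⁻¹ + (A * X⁻¹)ᵀ) = (2:ℝ) • (A * X⁻¹) by module,
        smul_smul]
      norm_num
    simp only [Q, this, mul_assoc, hiX, mul_one]
  · rw [hFP, transpose_mul, transpose_transpose, hXit]
    show C * X⁻¹ * X = C
    rw [Matrix.mul_assoc, hiX, Matrix.mul_one]
  · -- congruence
    have key : Ksmat n m R F P D =
        (fromBlocks X⁻¹ 0 0 (1 : Matrix (Fin m ⊕ Fin m) (Fin m ⊕ Fin m) ℝ)) *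
          (-(BRmat n m A B C D X)) *
          (fromBlocks X⁻¹ 0 0 1)ᴴ := by
      rw [conjTranspose_eq_transpose_of_trivial, fromBlocks_transpose, transpose_one,
        transpose_zero, hXit]
      simp only [BRmat, blk3, Matrix.fromBlocks_neg, fromBlocks_multiply]
      simp only [Matrix.zero_mul, Matrix.mul_zero, Matrix.mul_one, Matrix.one_mul,
        add_zero, zero_add, transpose_zero, neg_neg, Matrix.mul_fromCols,
        Matrix.fromRows_mul, Matrix.fromCols_neg, Matrix.fromRows_neg, mul_neg, neg_mul]
      simp only [Ksmat, blk3]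
      have e11 : -(X⁻¹ * (Aᵀ * X + X * A) * X⁻¹) = (2:ℝ) • R := by
        have t1 : X⁻¹ * (Aᵀ * X) * X⁻¹ = X⁻¹ * Aᵀ := by
          rw [← Matrix.mul_assoc X⁻¹ Aᵀ X, Matrix.mul_assoc, hXi, Matrix.mul_one]
        have t2 : X⁻¹ * (X * A) * X⁻¹ = A * X⁻¹ := by
          rw [← Matrix.mul_assoc X⁻¹ X A, hiX, Matrix.one_mul]
        rw [h2R, Matrix.mul_add, Matrix.add_mul, t1, t2, add_comm]
      have e12 : X⁻¹ * -(X * B) = -(F - P) := by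
        rw [hFmP, Matrix.mul_neg, ← Matrix.mul_assoc, hiX, Matrix.one_mul]
      have e13 : X⁻¹ * -Cᵀ = -(F + P) := by
        rw [hFP, Matrix.mul_neg]
      have e21 : -(Bᵀ * X) * X⁻¹ = -(F - P)ᵀ := by
        rw [hFmP, Matrix.neg_mul, Matrix.mul_assoc, hXi, Matrix.mul_one]
      have e31 : -C * X⁻¹ = -(F + P)ᵀ := by
        rw [hFP, transpose_mul, transpose_transpose, hXit, Matrix.neg_mul]
      rw [e11, e12, e13, e21, e31]
    rw [key]
    exact hLMI.mul_mul_conjTranspose_same _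
end

section
/- Let $J, R, Q \in \mathbb{R}^{n \times n}$ with $J^\top = -J$, $Q$ symmetric, $F, P \in \mathbb{R}^{n \times m}$, $D \in \mathbb{R}^{m \times m}$, and suppose $K_s = \begin{pmatrix} 2R & -(F-P) & -(F+P) \\ -(F-P)^\top & I_m & -D^\top \\ -(F+P)^\top & -D & I_m \end{pmatrix} \succeq 0$. Then for every $x \in \mathbb{R}^n$ and $u \in \mathbb{R}^m$, setting $z = Qx$, $\dot{x} = (J-R)z + (F-P)u$ and $y = (F+P)^\top z + Du$, one has $2\, x^\top Q \dot{x} \leq \|u\|^2 - \|y\|^2$. -/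
open Matrix

theorem stmt6 (n m : ℕ)
    (J R Q : Matrix (Fin n) (Fin n) ℝ) (F P : Matrix (Fin n) (Fin m) ℝ)
    (D : Matrix (Fin m) (Fin m) ℝ)
    (hJ : Jᵀ = -J) (hQ : Qᵀ = Q)
    (hK : (Ksmat n m R F P D).PosSemidef)
    (x : Fin n → ℝ) (u : Fin m → ℝ) :
    let z := Q *ᵥ x
    let xdot := (J - R) *ᵥ z + (F - P) *ᵥ u
    let y := (F + P)ᵀ *ᵥ z + D *ᵥ u
    2 * (x ⬝ᵥ (Q *ᵥ xdot)) ≤ u ⬝ᵥ u - y ⬝ᵥ y := by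
  intro z xdot y
  have h := hK.dotProduct_mulVec_nonneg (Sum.elim z (Sum.elim u y))
  simp only [Ksmat, blk3, fromBlocks_mulVec, fromRows_mulVec, Sum.elim_comp_inl,
    Sum.elim_comp_inr, fromCols_mulVec_sumElim,
    RCLike.star_def, starRingEnd_apply, star_trivial, sumElim_dotProduct_sumElim,
    neg_mulVec, one_mulVec, smul_mulVec, dotProduct_add, dotProduct_neg,
    dotProduct_smul, smul_eq_mul] at h
  -- transpose moves
  have hdz : ∀ (M : Matrix (Fin n) (Fin m) ℝ) (w : Fin m → ℝ), w ⬝ᵥ Mᵀ *ᵥ z = z ⬝ᵥ M *ᵥ w := by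
    intro M w
    rw [dotProduct_mulVec, vecMul_transpose, dotProduct_comm]
  have hDy : y ⬝ᵥ D *ᵥ u = u ⬝ᵥ Dᵀ *ᵥ y := by
    rw [dotProduct_mulVec, ← mulVec_transpose, dotProduct_comm]
  have hJz : z ⬝ᵥ J *ᵥ z = 0 := by
    have : z ⬝ᵥ J *ᵥ z = - (z ⬝ᵥ J *ᵥ z) := by
      conv_lhs => rw [dotProduct_mulVec, ← mulVec_transpose, hJ, dotProduct_comm, neg_mulVec,
        dotProduct_neg]
    linarith
  have hx : x ⬝ᵥ Q *ᵥ xdot = z ⬝ᵥ xdot := by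
    rw [dotProduct_mulVec, ← mulVec_transpose, hQ]
  have hy : y ⬝ᵥ y = z ⬝ᵥ (F + P) *ᵥ y + u ⬝ᵥ Dᵀ *ᵥ y := by
    show ((F + P)ᵀ *ᵥ z + D *ᵥ u) ⬝ᵥ y = _
    rw [add_dotProduct, dotProduct_comm ((F+P)ᵀ *ᵥ z), hdz, dotProduct_comm (D *ᵥ u), hDy]
  have hz : z ⬝ᵥ xdot = z ⬝ᵥ J *ᵥ z - z ⬝ᵥ R *ᵥ z + z ⬝ᵥ (F - P) *ᵥ u := by
    show z ⬝ᵥ ((J - R) *ᵥ z + (F - P) *ᵥ u) = _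
    rw [dotProduct_add, sub_mulVec, dotProduct_sub]
  rw [hdz, hdz] at h
  rw [hx, hz, hJz]
  nlinarith [h]
end

section
/- Let $X = \begin{pmatrix} X_{11} & X_{12} & X_{13} \\ X_{12}^\top & X_{22} & X_{23} \\ X_{13}^\top & X_{23}^\top & X_{33} \end{pmatrix} \succeq 0$ be a symmetric positive semidefinite block matrix with $X_{11}$ of size $n$ and $X_{22}, X_{33}$ symmetric of size $m$. Let $\alpha_2 = \max(1, \lambda_{\max}(X_{22}))$ and $\alpha_3 = \max(1, \lambda_{\max}(X_{33}))$. Then the matrix $\tilde{X} = \begin{pmatrix} X_{11} & X_{12}/\alpha_2 & X_{13}/\alpha_3 \\ X_{12}^\top/\alpha_2 & I_m & X_{23}/(\alpha_2\alpha_3) \\ X_{13}^\top/\alpha_3 & X_{23}^\top/(\alpha_2\alpha_3) & I_m \end{pmatrix}$ is positive semidefinite. -/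
open Matrix

lemma aux_smul_psd {k : Type*} [Fintype k] {M : Matrix k k ℝ} (hM : M.PosSemidef)
    {c : ℝ} (hc : 0 ≤ c) : (c • M).PosSemidef := by
  constructor
  · have := hM.1.eq
    unfold Matrix.IsHermitian
    rw [conjTranspose_smul, this, star_trivial]
  · intro x
    exact (hM.smul hc).2 x

lemma aux_blockdiag {p q : Type*} [Fintype p] [Fintype q]
    {A : Matrix p p ℝ} {B : Matrix q q ℝ} (hA : A.PosSemidef) (hB : B.PosSemidef) :
    (fromBlocks A 0 0 B).PosSemidef := by
  refine Matrix.PosSemidef.of_dotProduct_mulVec_nonneg ?_ ?_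
  · rw [isHermitian_fromBlocks_iff]
    exact ⟨hA.1, by simp, by simp, hB.1⟩
  · intro x
    have hx : x = Sum.elim (x ∘ Sum.inl) (x ∘ Sum.inr) := by ext i; cases i <;> rfl
    rw [hx, fromBlocks_mulVec]
    simp only [zero_mulVec, add_zero, zero_add, star_trivial, Sum.elim_comp_inl, Sum.elim_comp_inr]
    rw [sumElim_dotProduct_sumElim]
    have := hA.dotProduct_mulVec_nonneg (x ∘ Sum.inl)
    have := hB.dotProduct_mulVec_nonneg (x ∘ Sum.inr)
    simp only [star_trivial] at *
    linarith

lemma aux_eig {k : ℕ} {A : Matrix (Fin k) (Fin k) ℝ} (hA : A.IsHermitian) {c : ℝ}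
    (hc : ∀ i, hA.eigenvalues i ≤ c) :
    (c • (1 : Matrix (Fin k) (Fin k) ℝ) - A).PosSemidef := by
  have hU : (hA.eigenvectorUnitary : Matrix (Fin k) (Fin k) ℝ) *
      star (hA.eigenvectorUnitary : Matrix (Fin k) (Fin k) ℝ) = 1 :=
    (Matrix.mem_unitaryGroup_iff).mp hA.eigenvectorUnitary.2
  have h1 : c • (1 : Matrix (Fin k) (Fin k) ℝ) - A =
      (hA.eigenvectorUnitary : Matrix (Fin k) (Fin k) ℝ) *
        (diagonal fun i => c - hA.eigenvalues i) *
        star (hA.eigenvectorUnitary : Matrix (Fin k) (Fin k) ℝ) := by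
    conv_lhs => rw [hA.spectral_theorem, Unitary.conjStarAlgAut_apply]
    have : (diagonal fun i => c - hA.eigenvalues i) =
        c • (1 : Matrix (Fin k) (Fin k) ℝ) - diagonal (RCLike.ofReal ∘ hA.eigenvalues) := by
      rw [smul_one_eq_diagonal, diagonal_sub]
      rfl
    rw [this, Matrix.mul_sub, Matrix.sub_mul, Matrix.mul_smul, mul_one, Matrix.smul_mul, hU]
  rw [h1, Matrix.star_eq_conjTranspose]
  exact (posSemidef_diagonal_iff.mpr fun i => sub_nonneg.mpr (hc i)).mul_mul_conjTranspose_same _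

noncomputable section

theorem stmt9 (n m : ℕ)
    (X11 : Matrix (Fin n) (Fin n) ℝ) (X12 X13 : Matrix (Fin n) (Fin m) ℝ)
    (X22 X23 X33 : Matrix (Fin m) (Fin m) ℝ)
    (h22 : X22.IsHermitian) (h33 : X33.IsHermitian)
    (hX : (blk3 n m X11 X12 X13 X12ᵀ X13ᵀ X22 X23 X23ᵀ X33).PosSemidef) :
    let a2 : ℝ := max 1 (⨆ i, h22.eigenvalues i)
    let a3 : ℝ := max 1 (⨆ i, h33.eigenvalues i)
    (blk3 n m X11 (a2⁻¹ • X12) (a3⁻¹ • X13) (a2⁻¹ • X12ᵀ) (a3⁻¹ • X13ᵀ)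
      1 ((a2 * a3)⁻¹ • X23) ((a2 * a3)⁻¹ • X23ᵀ) 1).PosSemidef := by
  intro a2 a3
  have ha2 : (1:ℝ) ≤ a2 := le_max_left _ _
  have ha3 : (1:ℝ) ≤ a3 := le_max_left _ _
  have ha2p : (0:ℝ) < a2 := lt_of_lt_of_le one_pos ha2
  have ha3p : (0:ℝ) < a3 := lt_of_lt_of_le one_pos ha3
  have he2 : ∀ i, h22.eigenvalues i ≤ a2 * a2 := fun i =>
    le_trans (le_trans (le_ciSup (Set.Finite.bddAbove (Set.finite_range _)) i)
      (le_max_right _ _)) (le_mul_of_one_le_left ha2p.le ha2)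
  have he3 : ∀ i, h33.eigenvalues i ≤ a3 * a3 := fun i =>
    le_trans (le_trans (le_ciSup (Set.Finite.bddAbove (Set.finite_range _)) i)
      (le_max_right _ _)) (le_mul_of_one_le_left ha3p.le ha3)
  have hc2 : ((1 : Matrix (Fin m) (Fin m) ℝ) - (a2⁻¹ * a2⁻¹) • X22).PosSemidef := by
    have h := aux_smul_psd (aux_eig h22 he2) (c := a2⁻¹ * a2⁻¹) (by positivity)
    have heq : (a2⁻¹ * a2⁻¹) • ((a2 * a2) • (1 : Matrix (Fin m) (Fin m) ℝ) - X22)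
        = 1 - (a2⁻¹ * a2⁻¹) • X22 := by
      rw [smul_sub, smul_smul]
      congr 1
      rw [show (a2⁻¹ * a2⁻¹) * (a2 * a2) = 1 by field_simp, one_smul]
    rwa [heq] at h
  have hc3 : ((1 : Matrix (Fin m) (Fin m) ℝ) - (a3⁻¹ * a3⁻¹) • X33).PosSemidef := by
    have h := aux_smul_psd (aux_eig h33 he3) (c := a3⁻¹ * a3⁻¹) (by positivity)
    have heq : (a3⁻¹ * a3⁻¹) • ((a3 * a3) • (1 : Matrix (Fin m) (Fin m) ℝ) - X33)
        = 1 - (a3⁻¹ * a3⁻¹) • X33 := by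
      rw [smul_sub, smul_smul]
      congr 1
      rw [show (a3⁻¹ * a3⁻¹) * (a3 * a3) = 1 by field_simp, one_smul]
    rwa [heq] at h
  set D : Matrix (Fin n ⊕ (Fin m ⊕ Fin m)) (Fin n ⊕ (Fin m ⊕ Fin m)) ℝ :=
    fromBlocks 1 0 0 (fromBlocks (a2⁻¹ • 1) 0 0 (a3⁻¹ • 1)) with hD
  have key : blk3 n m X11 (a2⁻¹ • X12) (a3⁻¹ • X13) (a2⁻¹ • X12ᵀ) (a3⁻¹ • X13ᵀ)
      1 ((a2 * a3)⁻¹ • X23) ((a2 * a3)⁻¹ • X23ᵀ) 1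
      = D * (blk3 n m X11 X12 X13 X12ᵀ X13ᵀ X22 X23 X23ᵀ X33) * Dᴴ +
        fromBlocks 0 0 0 (fromBlocks (1 - (a2⁻¹ * a2⁻¹) • X22) 0 0
          (1 - (a3⁻¹ * a3⁻¹) • X33)) := by
    simp only [blk3, hD, fromBlocks_conjTranspose, conjTranspose_one, conjTranspose_zero,
      conjTranspose_smul, star_trivial, fromBlocks_multiply, fromCols_mul_fromBlocks,
      fromBlocks_mul_fromRows, Matrix.one_mul, Matrix.mul_one, Matrix.zero_mul,
      Matrix.mul_zero, add_zero, zero_add, Matrix.smul_mul, Matrix.mul_smul, smul_smul,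
      Matrix.one_mul, fromBlocks_add, mul_inv]
    rw [add_sub_cancel, add_sub_cancel, mul_comm a3⁻¹ a2⁻¹]
  rw [key]
  exact (hX.mul_mul_conjTranspose_same D).add
    (aux_blockdiag Matrix.PosSemidef.zero (aux_blockdiag hc2 hc3))
end
end

section
/- Let $(A_I, B_I, C_I, D_I)$ be a system with $I_m + D_I$ invertible, and let $X \succ 0$ be a symmetric matrix satisfying the impedance-passivity (positive-real) LMI $\begin{pmatrix} A_I^\top X + X A_I & X B_I - C_I^\top \\ B_I^\top X - C_I & -(D_I + D_I^\top) \end{pmatrix} \preceq 0$. Define the external Cayley transform $A_S = A_I - B_I (I_m + D_I)^{-1} C_I$, $B_S = \sqrt{2}\, B_I (I_m + D_I)^{-1}$, $C_S = -\sqrt{2}\,(I_m + D_I)^{-1} C_I$, $D_S = -(I_m + D_I)^{-1}(D_I - I_m)$. Then the same $X$ satisfies the scattering (bounded-real) LMI $\begin{pmatrix} A_S^\top X + X A_S & X B_S & C_S^\top \\ B_S^\top X & -I_m & D_S^\top \\ C_S & D_S & -I_m \end{pmatrix} \preceq 0$. -/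
open Matrix

lemma fromColumns_add' {R m n₁ n₂ : Type*} [Add R] (A₁ C₁ : Matrix m n₁ R) (A₂ C₂ : Matrix m n₂ R) :
    fromCols A₁ A₂ + fromCols C₁ C₂ = fromCols (A₁ + C₁) (A₂ + C₂) := by
  ext i (j|j) <;> simp

lemma fromRows_add' {R m₁ m₂ n : Type*} [Add R] (A₁ C₁ : Matrix m₁ n R) (A₂ C₂ : Matrix m₂ n R) :
    fromRows A₁ A₂ + fromRows C₁ C₂ = fromRows (A₁ + C₁) (A₂ + C₂) := by
  ext (i|i) j <;> simp

lemma fromColumns_sub' {R m n₁ n₂ : Type*} [Sub R] (A₁ C₁ : Matrix m n₁ R) (A₂ C₂ : Matrix m n₂ R) :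
    fromCols A₁ A₂ - fromCols C₁ C₂ = fromCols (A₁ - C₁) (A₂ - C₂) := by
  ext i (j|j) <;> simp

lemma toNest {R n₁ n₂ n₃ : Type*} (M11 : Matrix n₁ n₁ R) (M12 : Matrix n₁ n₂ R)
    (M13 : Matrix n₁ n₃ R) (M21 : Matrix n₂ n₁ R) (M31 : Matrix n₃ n₁ R)
    (M22 : Matrix n₂ n₂ R) (M23 : Matrix n₂ n₃ R) (M32 : Matrix n₃ n₂ R) (M33 : Matrix n₃ n₃ R) :
    Matrix.fromBlocks M11 (Matrix.fromCols M12 M13) (Matrix.fromRows M21 M31)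
      (Matrix.fromBlocks M22 M23 M32 M33) =
    fromRows (fromCols M11 (fromCols M12 M13))
      (fromRows (fromCols M21 (fromCols M22 M23))
        (fromCols M31 (fromCols M32 M33))) := by
  ext (i|j|k) (i'|j'|k') <;> rfl


noncomputable section

theorem stmt13 (n m : ℕ)
    (AI : Matrix (Fin n) (Fin n) ℝ) (BI : Matrix (Fin n) (Fin m) ℝ)
    (CI : Matrix (Fin m) (Fin n) ℝ) (DI : Matrix (Fin m) (Fin m) ℝ)
    (hD : IsUnit ((1 : Matrix (Fin m) (Fin m) ℝ) + DI))
    (X : Matrix (Fin n) (Fin n) ℝ) (hX : X.PosDef)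
    (hPR : (-(Matrix.fromBlocks (AIᵀ * X + X * AI) (X * BI - CIᵀ)
      (BIᵀ * X - CI) (-(DI + DIᵀ)))).PosSemidef) :
    let AS := AI - BI * ((1 : Matrix (Fin m) (Fin m) ℝ) + DI)⁻¹ * CI
    let BS := Real.sqrt 2 • (BI * ((1 : Matrix (Fin m) (Fin m) ℝ) + DI)⁻¹)
    let CS := -(Real.sqrt 2 • (((1 : Matrix (Fin m) (Fin m) ℝ) + DI)⁻¹ * CI))
    let DS := -(((1 : Matrix (Fin m) (Fin m) ℝ) + DI)⁻¹ * (DI - 1))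
    (-(BRmat n m AS BS CS DS X)).PosSemidef := by
  intro AS BS CS DS
  have hdet : IsUnit ((1 : Matrix (Fin m) (Fin m) ℝ) + DI).det :=
    (Matrix.isUnit_iff_isUnit_det _).mp hD
  set s := Real.sqrt 2 with hs
  have hs2 : s * s = 2 := Real.mul_self_sqrt (by norm_num)
  set E := ((1 : Matrix (Fin m) (Fin m) ℝ) + DI)⁻¹ with hEdef
  have hEr : ((1 : Matrix (Fin m) (Fin m) ℝ) + DI) * E = 1 := Matrix.mul_nonsing_inv _ hdet
  have hEl : E * ((1 : Matrix (Fin m) (Fin m) ℝ) + DI) = 1 := Matrix.nonsing_inv_mul _ hdet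
  have hED : E * DI = 1 - E := by
    have h := hEl; rw [Matrix.mul_add, Matrix.mul_one] at h; exact eq_sub_of_add_eq' h
  have hDE : DI * E = 1 - E := by
    have h := hEr; rw [Matrix.add_mul, Matrix.one_mul] at h; exact eq_sub_of_add_eq' h
  have hEDt : Eᵀ * DIᵀ = 1 - Eᵀ := by
    have h := congrArg Matrix.transpose hDE
    simpa [Matrix.transpose_mul] using h
  have hDEt : DIᵀ * Eᵀ = 1 - Eᵀ := by
    have h := congrArg Matrix.transpose hED
    simpa [Matrix.transpose_mul] using h
  -- padded versions for simp
  have hEDm : ∀ {k : Type} (M : Matrix (Fin m) k ℝ), E * (DI * M) = M - E * M := by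
    intro k M; rw [← Matrix.mul_assoc, hED, Matrix.sub_mul, Matrix.one_mul]
  have hDEm : ∀ {k : Type} (M : Matrix (Fin m) k ℝ), DI * (E * M) = M - E * M := by
    intro k M; rw [← Matrix.mul_assoc, hDE, Matrix.sub_mul, Matrix.one_mul]
  have hEDtm : ∀ {k : Type} (M : Matrix (Fin m) k ℝ), Eᵀ * (DIᵀ * M) = M - Eᵀ * M := by
    intro k M; rw [← Matrix.mul_assoc, hEDt, Matrix.sub_mul, Matrix.one_mul]
  have hDEtm : ∀ {k : Type} (M : Matrix (Fin m) k ℝ), DIᵀ * (Eᵀ * M) = M - Eᵀ * M := by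
    intro k M; rw [← Matrix.mul_assoc, hDEt, Matrix.sub_mul, Matrix.one_mul]
  set n11 : Matrix (Fin n) (Fin n) ℝ := -(AIᵀ * X + X * AI) with hn11
  set n12 : Matrix (Fin n) (Fin m) ℝ := CIᵀ - X * BI with hn12
  set n21 : Matrix (Fin m) (Fin n) ℝ := CI - BIᵀ * X with hn21
  set n22 : Matrix (Fin m) (Fin m) ℝ := DI + DIᵀ with hn22
  set G : Matrix (Fin n ⊕ Fin m) (Fin n ⊕ (Fin m ⊕ Fin m)) ℝ :=
    fromBlocks 1 0 (-(E * CI)) (fromCols (s • E) 0) with hG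
  set Hm : Matrix (Fin m) (Fin n ⊕ (Fin m ⊕ Fin m)) ℝ :=
    fromCols (s • (E * CI)) (fromCols (E * (DI - 1)) 1) with hH
  set N : Matrix (Fin n ⊕ Fin m) (Fin n ⊕ Fin m) ℝ :=
    -(Matrix.fromBlocks (AIᵀ * X + X * AI) (X * BI - CIᵀ) (BIᵀ * X - CI) (-(DI + DIᵀ))) with hNdef
  have hNb : N = fromBlocks n11 n12 n21 n22 := by
    rw [hNdef, Matrix.fromBlocks_neg, neg_neg, hn11, hn12, hn21, hn22, neg_sub, neg_sub]
  have hNG : N * G = fromBlocks (n11 - n12 * (E * CI)) (fromCols (s • (n12 * E)) 0)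
      (n21 - n22 * (E * CI)) (fromCols (s • (n22 * E)) 0) := by
    rw [hNb, hG, Matrix.fromBlocks_multiply]
    rw [Matrix.fromBlocks_inj]
    refine ⟨?_, ?_, ?_, ?_⟩
    · rw [Matrix.mul_one, Matrix.mul_neg, ← sub_eq_add_neg]
    · rw [Matrix.mul_zero, Matrix.mul_fromCols, Matrix.mul_zero, Matrix.mul_smul, zero_add]
    · rw [Matrix.mul_one, Matrix.mul_neg, ← sub_eq_add_neg]
    · rw [Matrix.mul_zero, Matrix.mul_fromCols, Matrix.mul_zero, Matrix.mul_smul, zero_add]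
  have hGT : Gᵀ = fromBlocks 1 (-(CIᵀ * Eᵀ)) 0 (fromRows (s • Eᵀ) 0) := by
    rw [hG, Matrix.fromBlocks_transpose, Matrix.transpose_fromCols]
    simp [Matrix.transpose_mul]
  have hGNG : Gᵀ * (N * G) = fromBlocks
      ((n11 - n12 * (E * CI)) - CIᵀ * Eᵀ * (n21 - n22 * (E * CI)))
      (fromCols (s • (n12 * E) - CIᵀ * Eᵀ * (s • (n22 * E))) 0)
      (fromRows (s • (Eᵀ * (n21 - n22 * (E * CI)))) 0)
      (fromBlocks (s • (Eᵀ * (s • (n22 * E)))) 0 0 0) := by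
    rw [hGT, hNG, Matrix.fromBlocks_multiply]
    rw [Matrix.fromBlocks_inj]
    refine ⟨?_, ?_, ?_, ?_⟩
    · rw [Matrix.one_mul, Matrix.neg_mul, ← sub_eq_add_neg]
    · rw [Matrix.one_mul, Matrix.neg_mul, ← sub_eq_add_neg, Matrix.mul_fromCols,
        Matrix.mul_zero, fromColumns_sub']
      simp
    · rw [Matrix.zero_mul, zero_add, Matrix.fromRows_mul, Matrix.zero_mul, Matrix.smul_mul]
    · rw [Matrix.zero_mul, zero_add, Matrix.fromRows_mul, Matrix.zero_mul,
        Matrix.mul_fromCols, Matrix.mul_zero, Matrix.smul_mul]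
      ext (i|j) (i'|j') <;> simp
  have hHH : Hmᵀ * Hm = fromBlocks
      ((s • (E * CI))ᵀ * (s • (E * CI)))
      (fromCols ((s • (E * CI))ᵀ * (E * (DI - 1))) ((s • (E * CI))ᵀ * (1:Matrix (Fin m) (Fin m) ℝ)))
      (fromRows ((E * (DI - 1))ᵀ * (s • (E * CI))) ((1:Matrix (Fin m) (Fin m) ℝ)ᵀ * (s • (E * CI))))
      (fromBlocks ((E * (DI - 1))ᵀ * (E * (DI - 1))) ((E * (DI - 1))ᵀ * (1:Matrix (Fin m) (Fin m) ℝ))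
        ((1:Matrix (Fin m) (Fin m) ℝ)ᵀ * (E * (DI - 1))) ((1:Matrix (Fin m) (Fin m) ℝ)ᵀ * (1:Matrix (Fin m) (Fin m) ℝ))) := by
    rw [hH]
    ext (i|j|k) (i'|j'|k') <;> rfl
  have hLHS : -(BRmat n m AS BS CS DS X) = fromBlocks (-(ASᵀ * X + X * AS))
      (fromCols (-(X * BS)) (-CSᵀ)) (fromRows (-(BSᵀ * X)) (-CS))
      (fromBlocks 1 (-DSᵀ) (-DS) 1) := by
    simp only [BRmat, blk3, Matrix.fromBlocks_neg, Matrix.fromCols_neg, Matrix.fromRows_neg,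
      neg_neg]
  have key : -(BRmat n m AS BS CS DS X) = Gᵀ * (N * G) + Hmᵀ * Hm := by
    rw [hLHS, hGNG, hHH, toNest, toNest, toNest, fromRows_add', fromColumns_add',
      fromColumns_add', fromRows_add', fromColumns_add', fromColumns_add',
      fromColumns_add', fromColumns_add']
    rw [fromRows_ext_iff]
    refine ⟨?_, ?_⟩
    · rw [fromCols_ext_iff]
      refine ⟨?_, ?_⟩
      · -- block (1,1)
        simp only [AS]
        rw [← hEdef, hn11, hn12, hn21, hn22]
        simp only [Matrix.transpose_mul, Matrix.transpose_smul, Matrix.transpose_sub,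
          Matrix.transpose_add, Matrix.transpose_neg, Matrix.transpose_one,
          Matrix.mul_sub, Matrix.sub_mul, Matrix.mul_add, Matrix.add_mul,
          Matrix.mul_smul, Matrix.smul_mul, Matrix.mul_one, Matrix.one_mul,
          Matrix.mul_assoc, hED, hDE, hEDt, hDEt, hEDm, hDEm, hEDtm, hDEtm, smul_smul, hs2,
          Matrix.neg_mul, Matrix.mul_neg, neg_neg, smul_sub, smul_add]
        module
      · rw [fromCols_ext_iff]
        refine ⟨?_, ?_⟩
        · -- block (1,2)
          simp only [BS]
          rw [← hEdef, hn12, hn22]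
          simp only [Matrix.transpose_mul, Matrix.transpose_smul, Matrix.transpose_sub,
            Matrix.transpose_add, Matrix.transpose_neg, Matrix.transpose_one,
            Matrix.mul_sub, Matrix.sub_mul, Matrix.mul_add, Matrix.add_mul,
            Matrix.mul_smul, Matrix.smul_mul, Matrix.mul_one, Matrix.one_mul,
            Matrix.mul_assoc, hED, hDE, hEDt, hDEt, hEDm, hDEm, hEDtm, hDEtm, smul_smul, hs2,
            Matrix.neg_mul, Matrix.mul_neg, neg_neg, smul_sub, smul_add]
          module
        · -- block (1,3)
          simp only [CS]
          rw [← hEdef]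
          simp [Matrix.transpose_smul, Matrix.transpose_mul]
          rfl
    · rw [fromRows_ext_iff]
      refine ⟨?_, ?_⟩
      · rw [fromCols_ext_iff]
        refine ⟨?_, ?_⟩
        · -- block (2,1)
          simp only [BS]
          rw [← hEdef, hn21, hn22]
          simp only [Matrix.transpose_mul, Matrix.transpose_smul, Matrix.transpose_sub,
            Matrix.transpose_add, Matrix.transpose_neg, Matrix.transpose_one,
            Matrix.mul_sub, Matrix.sub_mul, Matrix.mul_add, Matrix.add_mul,
            Matrix.mul_smul, Matrix.smul_mul, Matrix.mul_one, Matrix.one_mul,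
            Matrix.mul_assoc, hED, hDE, hEDt, hDEt, hEDm, hDEm, hEDtm, hDEtm, smul_smul, hs2,
            Matrix.neg_mul, Matrix.mul_neg, neg_neg, smul_sub, smul_add]
          module
        · rw [fromCols_ext_iff]
          refine ⟨?_, ?_⟩
          · -- block (2,2)
            rw [hn22]
            simp only [Matrix.transpose_mul, Matrix.transpose_smul, Matrix.transpose_sub,
              Matrix.transpose_add, Matrix.transpose_neg, Matrix.transpose_one,
              Matrix.mul_sub, Matrix.sub_mul, Matrix.mul_add, Matrix.add_mul,
              Matrix.mul_smul, Matrix.smul_mul, Matrix.mul_one, Matrix.one_mul,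
              Matrix.mul_assoc, hED, hDE, hEDt, hDEt, hEDm, hDEm, hEDtm, hDEtm,
              smul_smul, hs2, Matrix.neg_mul, Matrix.mul_neg, neg_neg, smul_sub, smul_add]
            module
          · -- block (2,3)
            simp only [DS]
            rw [← hEdef]
            simp [Matrix.transpose_mul]
      · rw [fromCols_ext_iff]
        refine ⟨?_, ?_⟩
        · -- block (3,1)
          simp only [CS]
          rw [← hEdef]
          simp
          rfl
        · rw [fromCols_ext_iff]
          refine ⟨?_, ?_⟩
          · -- block (3,2)
            simp only [DS]
            rw [← hEdef]
            simp
          · simp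
  rw [key]
  have h1 : (Gᵀ * (N * G)).PosSemidef := by
    have := hPR.conjTranspose_mul_mul_same G
    rwa [Matrix.conjTranspose_eq_transpose_of_trivial, Matrix.mul_assoc] at this
  have h2 : (Hmᵀ * Hm).PosSemidef := by
    have := Matrix.posSemidef_conjTranspose_mul_self Hm
    rwa [Matrix.conjTranspose_eq_transpose_of_trivial] at this
  exact h1.add h2
end
end

section
/- Let $J, R, Q \in \mathbb{R}^{n \times n}$ with $J^\top = -J$, $Q$ symmetric positive definite, $F, P \in \mathbb{R}^{n \times m}$, $D \in \mathbb{R}^{m \times m}$, with $K_s = \begin{pmatrix} 2R & -(F-P) & -(F+P) \\ -(F-P)^\top & I_m & -D^\top \\ -(F+P)^\top & -D & I_m \end{pmatrix} \succeq 0$. Then with $A = (J-R)Q$, $B = F-P$, $C = (F+P)^\top Q$, the matrix $X = Q$ satisfies $\begin{pmatrix} A^\top X + XA & XB & C^\top \\ B^\top X & -I_m & D^\top \\ C & D & -I_m \end{pmatrix} \preceq 0$. -/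
open Matrix

theorem stmt14 (n m : ℕ)
    (J R Q : Matrix (Fin n) (Fin n) ℝ) (F P : Matrix (Fin n) (Fin m) ℝ)
    (D : Matrix (Fin m) (Fin m) ℝ)
    (hJ : Jᵀ = -J) (hQ : Q.PosDef)
    (hK : (Ksmat n m R F P D).PosSemidef) :
    (-(BRmat n m ((J - R) * Q) (F - P) ((F + P)ᵀ * Q) D Q)).PosSemidef := by
  have hQs : Qᵀ = Q := hQ.isHermitian
  have hR : Rᵀ = R := by
    have h := hK.isHermitian
    ext i j
    have h2 := congrFun (congrFun h (Sum.inl j)) (Sum.inl i)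
    simp [Ksmat, blk3, Matrix.conjTranspose_apply, Matrix.fromBlocks] at h2
    simpa using h2.symm
  have key : -(BRmat n m ((J - R) * Q) (F - P) ((F + P)ᵀ * Q) D Q)
      = (Matrix.fromBlocks Q 0 0 (1 : Matrix (Fin m ⊕ Fin m) (Fin m ⊕ Fin m) ℝ))ᴴ *
        Ksmat n m R F P D * Matrix.fromBlocks Q 0 0 1 := by
    simp [Ksmat, BRmat, blk3, Matrix.fromBlocks_multiply, Matrix.fromBlocks_conjTranspose,
      Matrix.fromBlocks_transpose, Matrix.transpose_one, Matrix.transpose_zero,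
      Matrix.mul_fromCols, Matrix.fromRows_mul, Matrix.fromBlocks_neg,
      Matrix.fromCols_neg, Matrix.fromRows_neg, hQs, hJ, hR,
      Matrix.transpose_mul, Matrix.mul_sub, Matrix.sub_mul, Matrix.mul_add, Matrix.add_mul,
      Matrix.neg_mul, Matrix.mul_neg, two_smul, Matrix.mul_smul, Matrix.smul_mul, mul_assoc]
  rw [key]
  exact hK.conjTranspose_mul_mul_same _
end

section
/- Let $A \in \mathbb{R}^{n \times n}$, $B \in \mathbb{R}^{n \times m}$, $C \in \mathbb{R}^{m \times n}$, $D \in \mathbb{R}^{m \times m}$. There exists a symmetric positive definite $X$ with $\begin{pmatrix} A^\top X + XA & XB & C^\top \\ B^\top X & -I_m & D^\top \\ C & D & -I_m \end{pmatrix} \preceq 0$ if and only if there exist $J, R, Q \in \mathbb{R}^{n \times n}$ and $F, P \in \mathbb{R}^{n \times m}$ with $J^\top = -J$, $Q$ symmetric positive definite, $A = (J-R)Q$, $B = F-P$, $C = (F+P)^\top Q$, and $\begin{pmatrix} 2R & -(F-P) & -(F+P) \\ -(F-P)^\top & I_m & -D^\top \\ -(F+P)^\top & -D & I_m \end{pmatrix}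 \succeq 0$. -/
open Matrix

/-- Diagonal congruence of a blk3 matrix. -/
lemma conj_blk3 {n m : ℕ} (S : Matrix (Fin n) (Fin n) ℝ)
    (M11 : Matrix (Fin n) (Fin n) ℝ) (M12 M13 : Matrix (Fin n) (Fin m) ℝ)
    (M21 M31 : Matrix (Fin m) (Fin n) ℝ) (M22 M23 M32 M33 : Matrix (Fin m) (Fin m) ℝ) :
    (Matrix.fromBlocks S 0 0 (1 : Matrix (Fin m ⊕ Fin m) (Fin m ⊕ Fin m) ℝ)) *
      blk3 n m M11 M12 M13 M21 M31 M22 M23 M32 M33 *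
      (Matrix.fromBlocks S 0 0 1) =
    blk3 n m (S * M11 * S) (S * M12) (S * M13) (M21 * S) (M31 * S) M22 M23 M32 M33 := by
  simp [blk3, Matrix.fromBlocks_multiply, Matrix.mul_fromCols, Matrix.fromRows_mul]

lemma neg_blk3 {n m : ℕ}
    (M11 : Matrix (Fin n) (Fin n) ℝ) (M12 M13 : Matrix (Fin n) (Fin m) ℝ)
    (M21 M31 : Matrix (Fin m) (Fin n) ℝ) (M22 M23 M32 M33 : Matrix (Fin m) (Fin m) ℝ) :
    -(blk3 n m M11 M12 M13 M21 M31 M22 M23 M32 M33) =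
    blk3 n m (-M11) (-M12) (-M13) (-M21) (-M31) (-M22) (-M23) (-M32) (-M33) := by
  unfold blk3
  ext i j
  rcases i with i | (i | i) <;> rcases j with j | (j | j) <;>
    simp [Matrix.fromBlocks, Matrix.fromCols, Matrix.fromRows] <;> rfl

lemma diagS_herm {n m : ℕ} {S : Matrix (Fin n) (Fin n) ℝ} (hS : Sᵀ = S) :
    (Matrix.fromBlocks S 0 0 (1 : Matrix (Fin m ⊕ Fin m) (Fin m ⊕ Fin m) ℝ))ᴴ =
      Matrix.fromBlocks S 0 0 1 := by
  rw [Matrix.conjTranspose_eq_transpose_of_trivial, Matrix.fromBlocks_transpose]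
  simp [hS]

theorem stmt16 (n m : ℕ)
    (A : Matrix (Fin n) (Fin n) ℝ) (B : Matrix (Fin n) (Fin m) ℝ)
    (C : Matrix (Fin m) (Fin n) ℝ) (D : Matrix (Fin m) (Fin m) ℝ) :
    (∃ X : Matrix (Fin n) (Fin n) ℝ, X.PosDef ∧ (-(BRmat n m A B C D X)).PosSemidef) ↔
    (∃ (J R Q : Matrix (Fin n) (Fin n) ℝ) (F P : Matrix (Fin n) (Fin m) ℝ),
      Jᵀ = -J ∧ Q.PosDef ∧ (J - R) * Q = A ∧ F - P = B ∧ (F + P)ᵀ * Q = C ∧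
      (Ksmat n m R F P D).PosSemidef) := by
  constructor
  · rintro ⟨X, hX, hBR⟩
    have hXsym : Xᵀ = X := by
      have := hX.isHermitian
      rwa [Matrix.IsHermitian, Matrix.conjTranspose_eq_transpose_of_trivial] at this
    have hXu : IsUnit X.det := isUnit_iff_ne_zero.mpr (ne_of_gt hX.det_pos)
    have hinv : X⁻¹ * X = 1 := Matrix.nonsing_inv_mul X hXu
    have hinv' : X * X⁻¹ = 1 := Matrix.mul_nonsing_inv X hXu
    have hXinvsym : (X⁻¹)ᵀ = X⁻¹ := by
      rw [Matrix.transpose_nonsing_inv, hXsym]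
    set JJ := (1/2 : ℝ) • (A * X⁻¹ - (A * X⁻¹)ᵀ) with hJJ
    set RR := -((1/2 : ℝ) • (A * X⁻¹ + (A * X⁻¹)ᵀ)) with hRR
    set FF := (1/2 : ℝ) • (B + X⁻¹ * Cᵀ) with hFF
    set PP := (1/2 : ℝ) • (-B + X⁻¹ * Cᵀ) with hPP
    have hJR : JJ - RR = A * X⁻¹ := by
      rw [hJJ, hRR, sub_neg_eq_add, ← smul_add]
      have h : A * X⁻¹ - (A * X⁻¹)ᵀ + (A * X⁻¹ + (A * X⁻¹)ᵀ) = (2 : ℝ) • (A * X⁻¹) := by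
        rw [two_smul]; abel
      rw [h, smul_smul]; norm_num
    have h2R : (2 : ℝ) • RR = -(A * X⁻¹ + (A * X⁻¹)ᵀ) := by
      rw [hRR, smul_neg, smul_smul]; norm_num
    have hFPb : FF - PP = B := by
      rw [hFF, hPP, ← smul_sub]
      have h : B + X⁻¹ * Cᵀ - (-B + X⁻¹ * Cᵀ) = (2 : ℝ) • B := by rw [two_smul]; abel
      rw [h, smul_smul]; norm_num
    have hFPc : FF + PP = X⁻¹ * Cᵀ := by
      rw [hFF, hPP, ← smul_add]
      have h : B + X⁻¹ * Cᵀ + (-B + X⁻¹ * Cᵀ) = (2 : ℝ) • (X⁻¹ * Cᵀ) := by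
        rw [two_smul]; abel
      rw [h, smul_smul]; norm_num
    have hFPcT : (FF + PP)ᵀ = C * X⁻¹ := by
      rw [hFPc, Matrix.transpose_mul, hXinvsym, Matrix.transpose_transpose]
    refine ⟨JJ, RR, X, FF, PP, ?_, hX, ?_, hFPb, ?_, ?_⟩
    · rw [hJJ, Matrix.transpose_smul, Matrix.transpose_sub, Matrix.transpose_transpose,
        ← smul_neg, neg_sub]
    · rw [hJR, Matrix.mul_assoc, hinv, Matrix.mul_one]
    · rw [hFPcT, Matrix.mul_assoc, hinv, Matrix.mul_one]
    · have key : Ksmat n m RR FF PP D =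
          (Matrix.fromBlocks X⁻¹ 0 0 1) * (-(BRmat n m A B C D X)) *
            (Matrix.fromBlocks X⁻¹ 0 0 1) := by
        rw [BRmat, neg_blk3, conj_blk3]
        unfold Ksmat
        have e11 : X⁻¹ * -(Aᵀ * X + X * A) * X⁻¹ = (2 : ℝ) • RR := by
          rw [h2R, Matrix.transpose_mul, hXinvsym]
          rw [Matrix.mul_neg, Matrix.neg_mul, Matrix.mul_add, Matrix.add_mul]
          have t1 : X⁻¹ * (Aᵀ * X) * X⁻¹ = X⁻¹ * Aᵀ := by
            simp only [Matrix.mul_assoc, hinv', Matrix.mul_one]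
          have t2 : X⁻¹ * (X * A) * X⁻¹ = A * X⁻¹ := by
            rw [← Matrix.mul_assoc X⁻¹ X A, hinv, Matrix.one_mul]
          rw [t1, t2, add_comm (X⁻¹ * Aᵀ)]
        have e12 : X⁻¹ * -(X * B) = -(FF - PP) := by
          rw [hFPb, Matrix.mul_neg, ← Matrix.mul_assoc, hinv, Matrix.one_mul]
        have e13 : X⁻¹ * -Cᵀ = -(FF + PP) := by
          rw [hFPc, Matrix.mul_neg]
        have e21 : -(Bᵀ * X) * X⁻¹ = -(FF - PP)ᵀ := by
          rw [hFPb, Matrix.neg_mul, Matrix.mul_assoc, hinv', Matrix.mul_one]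
        have e31 : -C * X⁻¹ = -(FF + PP)ᵀ := by
          rw [hFPcT, Matrix.neg_mul]
        rw [e11, e12, e13, e21, e31]
        simp only [neg_neg]
      rw [key]
      have hps := hBR.mul_mul_conjTranspose_same
        (Matrix.fromBlocks X⁻¹ 0 0 (1 : Matrix (Fin m ⊕ Fin m) (Fin m ⊕ Fin m) ℝ))
      rwa [diagS_herm (m := m) hXinvsym] at hps
  · rintro ⟨J, R, Q, F, P, hJ, hQ, hA, hB, hC, hK⟩
    have hQsym : Qᵀ = Q := by
      have := hQ.isHermitian
      rwa [Matrix.IsHermitian, Matrix.conjTranspose_eq_transpose_of_trivial] at this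
    have hRsym : Rᵀ = R := by
      have h := hK.isHermitian
      rw [Matrix.IsHermitian, Matrix.conjTranspose_eq_transpose_of_trivial] at h
      ext i j
      have h2 := congrFun (congrFun h (Sum.inl i)) (Sum.inl j)
      simp [Ksmat, blk3, Matrix.fromBlocks, Matrix.transpose_apply] at h2
      rw [Matrix.transpose_apply]
      exact h2
    refine ⟨Q, hQ, ?_⟩
    have key : -(BRmat n m A B C D Q) =
        (Matrix.fromBlocks Q 0 0 1) * (Ksmat n m R F P D) *
          (Matrix.fromBlocks Q 0 0 1) := by
      rw [Ksmat, conj_blk3, BRmat, neg_blk3]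
      have hAT : Aᵀ = Q * (-J - R) := by
        rw [← hA, Matrix.transpose_mul, Matrix.transpose_sub, hJ, hRsym, hQsym]
      have e11 : -(Aᵀ * Q + Q * A) = Q * ((2 : ℝ) • R) * Q := by
        rw [hAT, ← hA, ← Matrix.mul_assoc Q (J - R) Q, ← Matrix.add_mul,
          ← Matrix.mul_add]
        have hs : (-J - R) + (J - R) = -((2 : ℝ) • R) := by rw [two_smul]; abel
        rw [hs, Matrix.mul_neg, Matrix.neg_mul, neg_neg]
      have e12 : -(Q * B) = Q * -(F - P) := by rw [hB, Matrix.mul_neg]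
      have e13 : -Cᵀ = Q * -(F + P) := by
        rw [← hC, Matrix.transpose_mul, hQsym, Matrix.transpose_transpose,
          Matrix.mul_neg]
      have e21 : -(Bᵀ * Q) = -(F - P)ᵀ * Q := by rw [hB, Matrix.neg_mul]
      have e31 : -C = -(F + P)ᵀ * Q := by rw [← hC, Matrix.neg_mul]
      rw [e11, e12, e13, e21, e31]
      simp only [neg_neg]
    rw [key]
    have hps := hK.mul_mul_conjTranspose_same
      (Matrix.fromBlocks Q 0 0 (1 : Matrix (Fin m ⊕ Fin m) (Fin m ⊕ Fin m) ℝ))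
    rwa [diagS_herm (m := m) hQsym] at hps
end
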